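/- Let δ be a limit ordinal and f an additive coloring of δ by a finite set T of colors (i.e., f assigns to each pair x < y < δ a color in T, such that f(x,z) is determined by f(x,y) and f(y,z) whenever x < y < z). Then there exists a subset J ⊆ δ, unbounded in δ, which is homogeneous for f: there is a color t₀ ∈ T with f(x,y) = t₀ for all x < y in J. -/

import Mathlib

open Ordinal Set

/-- The recursively built sequence: at stage `α`, apply the selection function `sel`
to an ordinal above all previous values, their thresholds, and the target `G α`. -/
noncomputable def acSeq (sel τ G : Ordinal.{u} → Ordinal.{u}) : Ordinal.{u} → Ordinal.{u} :=
  Ordinal.lt_wf.fix (fun α ih =>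
    sel (max (Ordinal.bsup α (fun β h => max (ih β h) (τ (ih β h)) + 1)) (G α)))

theorem acSeq_eq (sel τ G : Ordinal.{u} → Ordinal.{u}) (α : Ordinal.{u}) :
    acSeq sel τ G α =
      sel (max (Ordinal.bsup α (fun β _ =>
        max (acSeq sel τ G β) (τ (acSeq sel τ G β)) + 1)) (G α)) := by
  conv_lhs => rw [acSeq, WellFounded.fix_eq]
  rfl

/-- Transfinite recursion lemma: inside any unbounded `S ⊆ Iio δ`, given a threshold
function `τ` with values `< δ`, one can find an unbounded `J ⊆ S` such that any later
element of `J` is above the threshold of any earlier element. -/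
theorem acRec (δ : Ordinal) (hδ : Order.IsSuccLimit δ) (S : Set Ordinal)
    (hSsub : S ⊆ Set.Iio δ) (hS : ∀ b < δ, ∃ y ∈ S, b ≤ y)
    (τ : Ordinal → Ordinal) (hτ : ∀ y, y < δ → τ y < δ) :
    ∃ J : Set Ordinal, J ⊆ S ∧ (∀ b < δ, ∃ x ∈ J, b ≤ x) ∧
      ∀ x ∈ J, ∀ y ∈ J, x < y → τ x ≤ y := by
  -- selection function
  have hsel : ∀ b : Ordinal, ∃ y, y ∈ S ∧ (b < δ → b ≤ y) := by
    intro b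
    by_cases hb : b < δ
    · obtain ⟨y, hy, hby⟩ := hS b hb
      exact ⟨y, hy, fun _ => hby⟩
    · obtain ⟨y, hy, _⟩ := hS 0 hδ.pos
      exact ⟨y, hy, fun h => absurd h hb⟩
  choose sel hselS hselge using hsel
  -- fundamental sequence
  obtain ⟨G, hG⟩ := Ordinal.exists_fundamental_sequence δ
  have hGb : Ordinal.blsub δ.cof.ord G = δ := hG.2.2
  let G' : Ordinal → Ordinal := fun α => if h : α < δ.cof.ord then G α h else 0
  set x : Ordinal → Ordinal := acSeq sel τ G' with hx
  have hxS : ∀ α, x α ∈ S := by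
    intro α
    rw [hx, acSeq_eq]
    apply hselS
  have hxδ : ∀ α, x α < δ := fun α => hSsub (hxS α)
  set B : Ordinal → Ordinal := fun α =>
    max (Ordinal.bsup α (fun β _ => max (x β) (τ (x β)) + 1)) (G' α) with hB
  have hxB : ∀ α, x α = sel (B α) := fun α => by rw [hx, acSeq_eq]
  have hBδ : ∀ α, α < δ.cof.ord → B α < δ := by
    intro α hα
    apply max_lt
    · apply Ordinal.bsup_lt_ord
      · exact Cardinal.lt_ord.1 hα
      · intro β hβ
        have h1 : max (x β) (τ (x β)) < δ := max_lt (hxδ β) (hτ _ (hxδ β))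
        have := hδ.succ_lt h1
        rwa [Order.succ_eq_add_one] at this
    · simp only [G', dif_pos hα]
      have h4 := Ordinal.lt_blsub (o := δ.cof.ord) G α hα
      rw [hGb] at h4
      exact h4
  have hge : ∀ α, α < δ.cof.ord → B α ≤ x α := by
    intro α hα
    rw [hxB α]
    exact hselge _ (hBδ α hα)
  have hmono : ∀ β α, β < α → α < δ.cof.ord → x β < x α ∧ τ (x β) ≤ x α := by
    intro β α hβα hα
    have h1 : max (x β) (τ (x β)) + 1 ≤
        Ordinal.bsup α (fun β _ => max (x β) (τ (x β)) + 1) :=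
      Ordinal.le_bsup _ β hβα
    have h2 : max (x β) (τ (x β)) + 1 ≤ x α :=
      h1.trans ((le_max_left _ _).trans (hge α hα))
    have h3 : max (x β) (τ (x β)) < x α := lt_of_lt_of_le (lt_add_one _) h2
    exact ⟨lt_of_le_of_lt (le_max_left _ _) h3,
      le_of_lt (lt_of_le_of_lt (le_max_right _ _) h3)⟩
  refine ⟨{y | ∃ α, α < δ.cof.ord ∧ x α = y}, ?_, ?_, ?_⟩
  · rintro y ⟨α, _, rfl⟩
    exact hxS α
  · intro b hb
    have hbb : b < Ordinal.blsub δ.cof.ord G := by rw [hGb]; exact hb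
    rw [Ordinal.lt_blsub_iff] at hbb
    obtain ⟨α, hα, hbα⟩ := hbb
    refine ⟨x α, ⟨α, hα, rfl⟩, ?_⟩
    have : G' α ≤ x α := (le_max_right _ _).trans (hge α hα)
    simp only [G', dif_pos hα] at this
    exact hbα.trans this
  · rintro u ⟨α, hα, rfl⟩ v ⟨α', hα', rfl⟩ huv
    rcases lt_trichotomy α α' with h | h | h
    · exact (hmono α α' h hα').2
    · subst h; exact absurd huv (lt_irrefl _)
    · exact absurd ((hmono α' α h hα).1) (asymm huv)

/-- **Ramsey theorem for additive colorings of a limit ordinal** (Shelah, Thm 1.1).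
If `δ` is a limit ordinal and `f` is an additive coloring of `δ` by a finite set `T`
of colors, then there is an unbounded homogeneous subset `J` of `δ`. -/
theorem additive_coloring_limit_ordinal_unbounded_homogeneous
    (δ : Ordinal) (hδ : Order.IsSuccLimit δ) (T : Type) [Finite T]
    (f : Ordinal → Ordinal → T)
    (hadd : ∀ x₁ y₁ z₁ x₂ y₂ z₂ : Ordinal,
      x₁ < y₁ → y₁ < z₁ → z₁ < δ → x₂ < y₂ → y₂ < z₂ → z₂ < δ →
      f x₁ y₁ = f x₂ y₂ → f y₁ z₁ = f y₂ z₂ → f x₁ z₁ = f x₂ z₂) :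
    ∃ J : Set Ordinal, J ⊆ Set.Iio δ ∧ (∀ β < δ, ∃ x ∈ J, β ≤ x) ∧
      ∃ t₀ : T, ∀ x ∈ J, ∀ y ∈ J, x < y → f x y = t₀ := by
  classical
  have : Fintype T := Fintype.ofFinite T
  -- the "eventual agreement" relation
  set E : Ordinal → Ordinal → Prop :=
    fun x y => ∃ z, z < δ ∧ x < z ∧ y < z ∧ f x z = f y z with hE
  set C : Ordinal → Set Ordinal :=
    fun x => {y | x < y ∧ y < δ ∧ E x y} with hC
  -- Step 1: some x₀ has unbounded class C x₀
  have hstep1 : ∃ x₀, x₀ < δ ∧ ∀ b < δ, ∃ y ∈ C x₀, b ≤ y := by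
    by_contra hcon
    push_neg at hcon
    have hbnd : ∀ x : Ordinal, ∃ b, b < δ ∧ ∀ y ∈ C x, y < b := by
      intro x
      by_cases hx : x < δ
      · obtain ⟨b, hb, h⟩ := hcon x hx
        exact ⟨b, hb, fun y hy => h y hy⟩
      · refine ⟨1, (by have := hδ.succ_lt hδ.pos; rwa [Order.succ_eq_add_one, zero_add] at this), fun y hy => absurd (lt_trans ?_ hy.2.1) hx⟩
        exact hy.1
    choose bnd hbδ hbnd using hbnd
    -- increasing sequence escaping all previous classes
    let u : ℕ → Ordinal := fun k => Nat.rec 0 (fun _ p => max (p + 1) (bnd p)) k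
    have hu0 : u 0 = 0 := rfl
    have husucc : ∀ k, u (k + 1) = max (u k + 1) (bnd (u k)) := fun k => rfl
    have huδ : ∀ k, u k < δ := by
      intro k
      induction k with
      | zero => exact hδ.pos
      | succ k ih =>
        rw [husucc]
        apply max_lt
        · have := hδ.succ_lt ih; rwa [Order.succ_eq_add_one] at this
        · exact hbδ (u k)
    have humono : StrictMono u := by
      apply strictMono_nat_of_lt_succ
      intro k
      rw [husucc]
      exact lt_of_lt_of_le (lt_add_one _) (le_max_left _ _)
    set n := Fintype.card T with hn
    set z : Ordinal := u n + 1 with hz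
    have hzδ : z < δ := by
      have := hδ.succ_lt (huδ n); rwa [Order.succ_eq_add_one] at this
    have huz : ∀ i : Fin (n + 1), u i < z := by
      intro i
      calc u i ≤ u n := humono.monotone (Nat.lt_succ_iff.1 i.isLt)
      _ < z := lt_add_one _
    obtain ⟨i, j, hij, hfeq⟩ :=
      Fintype.exists_ne_map_eq_of_card_lt (fun i : Fin (n + 1) => f (u i) z)
        (by simp [hn])
    -- WLOG i < j
    wlog hlt : (i : ℕ) < (j : ℕ) generalizing i j
    · exact this j i hij.symm hfeq.symm
        ((Fin.val_ne_iff.2 hij).lt_or_gt.resolve_left hlt)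
    have hmem : (u j) ∈ C (u i) := by
      refine ⟨humono hlt, huδ j, z, hzδ, huz i, huz j, hfeq⟩
    have h1 : u j < bnd (u i) := hbnd _ _ hmem
    have h2 : bnd (u i) ≤ u (i + 1) := by rw [husucc]; exact le_max_right _ _
    have h3 : u (i + 1) ≤ u j := humono.monotone (Nat.succ_le_of_lt hlt)
    exact absurd (h1.trans_le (h2.trans h3)) (lt_irrefl _)
  obtain ⟨x₀, hx₀δ, hCunb⟩ := hstep1
  -- Step 2: pigeonhole a color c unbounded within C x₀
  have hstep2 : ∃ c : T, ∀ b < δ, ∃ y ∈ C x₀, f x₀ y = c ∧ b ≤ y := by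
    by_contra hcon
    push_neg at hcon
    have hbnd : ∀ c : T, ∃ b, b < δ ∧ ∀ y ∈ C x₀, f x₀ y = c → y < b := by
      intro c
      obtain ⟨b, hb, h⟩ := hcon c
      exact ⟨b, hb, fun y hy hfc => h y hy hfc⟩
    choose g hgδ hg using hbnd
    set B := (Finset.univ : Finset T).sup g with hBdef
    have hBδ : B < δ := by
      apply Finset.sup_lt_iff (by simpa using hδ.pos) |>.2
      intro c _
      exact hgδ c
    obtain ⟨y, hy, hBy⟩ := hCunb B hBδ
    have h1 : y < g (f x₀ y) := hg _ y hy rfl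
    have h2 : g (f x₀ y) ≤ B := Finset.le_sup (Finset.mem_univ _)
    exact absurd (h1.trans_le (h2.trans hBy)) (lt_irrefl _)
  obtain ⟨c, hSunb⟩ := hstep2
  set S : Set Ordinal := {y | y ∈ C x₀ ∧ f x₀ y = c} with hSdef
  have hSsub : S ⊆ Set.Iio δ := fun y hy => hy.1.2.1
  have hSunb' : ∀ b < δ, ∃ y ∈ S, b ≤ y := by
    intro b hb
    obtain ⟨y, hy, hfc, hby⟩ := hSunb b hb
    exact ⟨y, ⟨hy, hfc⟩, hby⟩
  -- Step 3: thresholds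
  have hτex : ∀ y : Ordinal, ∃ z, z < δ ∧
      (y ∈ S → (x₀ < z ∧ y < z ∧ f x₀ z = f y z)) := by
    intro y
    by_cases hy : y ∈ S
    · obtain ⟨z, hz, hxz, hyz, hfz⟩ := hy.1.2.2
      exact ⟨z, hz, fun _ => ⟨hxz, hyz, hfz⟩⟩
    · exact ⟨0, hδ.pos, fun h => absurd h hy⟩
  choose τ hτδ hτ using hτex
  -- Step 4: build J
  obtain ⟨J, hJS, hJunb, hJτ⟩ := acRec δ hδ S hSsub hSunb' τ (fun y _ => hτδ y)
  refine ⟨J, fun y hy => hSsub (hJS hy), hJunb, c, ?_⟩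
  intro x hx y hy hxy
  have hxS := hJS hx
  have hyS := hJS hy
  obtain ⟨hx₀τ, hxτ, hfτ⟩ := hτ x hxS
  have hτy : τ x ≤ y := hJτ x hx y hy hxy
  have hyδ : y < δ := hSsub hyS
  have key : f x₀ y = f x y := by
    rcases eq_or_lt_of_le hτy with h | h
    · rw [← h]; exact hfτ
    · exact hadd x₀ (τ x) y x (τ x) y hx₀τ h hyδ hxτ h hyδ hfτ rfl
  rw [← key]
  exact hyS.2
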